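/- arXiv:2007.05864 — 7 statements merged into one kernel-verified Lean document; each statement's English description precedes it below -/
import Mathlib

section
/- Let n, m, σ² with σ² ≥ 0, and suppose K_XX + σ²I and Θ_XX + σ²I are invertible. Set U = Θ_X'X(Θ_XX + σ²I)⁻¹ − K_X'X(K_XX + σ²I)⁻¹ ∈ ℝ^{m×n}. Then Σ_RP − Σ_NNGP = U (K_XX + σ²I) Uᵀ. In particular, if K_XX is positive semidefinite then Σ_RP − Σ_NNGP is positive semidefinite. -/
open Matrix

lemma matrix_aux {n m : ℕ} (A C B : Matrix (Fin n) (Fin n) ℝ)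
    (hCA : C * A = 1) (hAC : A * C = 1) (T K : Matrix (Fin n) (Fin m) ℝ) :
    (Tᵀ * B - Kᵀ * C) * A * (B * T - C * K)
      = Tᵀ * B * A * B * T - Tᵀ * B * K - Kᵀ * B * T + Kᵀ * C * K := by
  simp only [Matrix.sub_mul, Matrix.mul_sub, Matrix.mul_assoc]
  rw [← Matrix.mul_assoc A C K, hAC, Matrix.one_mul,
    ← Matrix.mul_assoc C A (B * T), hCA, Matrix.one_mul]
  abel

/-- With `U = Θ_X'X (Θ_XX + σ²I)⁻¹ − K_X'X (K_XX + σ²I)⁻¹`, we have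
`Σ_RP − Σ_NNGP = U (K_XX + σ²I) Uᵀ`; in particular if `K_XX` is positive semidefinite
then `Σ_RP − Σ_NNGP` is positive semidefinite. -/
theorem stmt0 (n m : ℕ) (hn : 0 < n) (hm : 0 < m) (σ2 : ℝ) (hσ : 0 ≤ σ2)
    (ΘXX KXX : Matrix (Fin n) (Fin n) ℝ) (hΘsymm : ΘXX.IsSymm) (hKsymm : KXX.IsSymm)
    (ΘXX' KXX' : Matrix (Fin n) (Fin m) ℝ)
    (ΘX'X' KX'X' : Matrix (Fin m) (Fin m) ℝ)
    (hKinv : IsUnit (KXX + σ2 • (1 : Matrix (Fin n) (Fin n) ℝ)).det)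
    (hΘinv : IsUnit (ΘXX + σ2 • (1 : Matrix (Fin n) (Fin n) ℝ)).det) :
    let ΘX'X := ΘXX'ᵀ
    let KX'X := KXX'ᵀ
    let SigNNGP := KX'X' - KX'X * (KXX + σ2 • 1)⁻¹ * KXX'
    let SigRP := KX'X' - ΘX'X * (ΘXX + σ2 • 1)⁻¹ * KXX'
      - KX'X * (ΘXX + σ2 • 1)⁻¹ * ΘXX'
      + ΘX'X * (ΘXX + σ2 • 1)⁻¹ * (KXX + σ2 • 1) * (ΘXX + σ2 • 1)⁻¹ * ΘXX'
    let U := ΘX'X * (ΘXX + σ2 • 1)⁻¹ - KX'X * (KXX + σ2 • 1)⁻¹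
    SigRP - SigNNGP = U * (KXX + σ2 • 1) * Uᵀ ∧
      (KXX.PosSemidef → (SigRP - SigNNGP).PosSemidef) := by
  intro ΘX'X KX'X SigNNGP SigRP U
  have hAsymm : (KXX + σ2 • (1 : Matrix (Fin n) (Fin n) ℝ))ᵀ = KXX + σ2 • 1 := by
    simp [transpose_add, transpose_smul, hKsymm.eq]
  have hBsymm : (ΘXX + σ2 • (1 : Matrix (Fin n) (Fin n) ℝ))ᵀ = ΘXX + σ2 • 1 := by
    simp [transpose_add, transpose_smul, hΘsymm.eq]
  have hUT : Uᵀ = (ΘXX + σ2 • 1)⁻¹ * ΘXX' - (KXX + σ2 • 1)⁻¹ * KXX' := by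
    show (ΘXX'ᵀ * (ΘXX + σ2 • 1)⁻¹ - KXX'ᵀ * (KXX + σ2 • 1)⁻¹)ᵀ = _
    rw [transpose_sub, transpose_mul, transpose_mul, transpose_transpose,
      transpose_transpose, transpose_nonsing_inv, transpose_nonsing_inv, hAsymm, hBsymm]
  have key : SigRP - SigNNGP = U * (KXX + σ2 • 1) * Uᵀ := by
    rw [hUT]
    show (KX'X' - ΘXX'ᵀ * (ΘXX + σ2 • 1)⁻¹ * KXX' - KXX'ᵀ * (ΘXX + σ2 • 1)⁻¹ * ΘXX'
        + ΘXX'ᵀ * (ΘXX + σ2 • 1)⁻¹ * (KXX + σ2 • 1) * (ΘXX + σ2 • 1)⁻¹ * ΘXX')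
        - (KX'X' - KXX'ᵀ * (KXX + σ2 • 1)⁻¹ * KXX')
      = (ΘXX'ᵀ * (ΘXX + σ2 • 1)⁻¹ - KXX'ᵀ * (KXX + σ2 • 1)⁻¹) * (KXX + σ2 • 1)
        * ((ΘXX + σ2 • 1)⁻¹ * ΘXX' - (KXX + σ2 • 1)⁻¹ * KXX')
    rw [matrix_aux (KXX + σ2 • 1) (KXX + σ2 • 1)⁻¹ (ΘXX + σ2 • 1)⁻¹
      (nonsing_inv_mul _ hKinv) (mul_nonsing_inv _ hKinv) ΘXX' KXX']
    abel
  refine ⟨key, fun hK => ?_⟩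
  rw [key]
  have hApsd : (KXX + σ2 • (1 : Matrix (Fin n) (Fin n) ℝ)).PosSemidef := by
    refine .of_dotProduct_mulVec_nonneg ?_ ?_
    · show _ᴴ = _
      rw [conjTranspose_eq_transpose_of_trivial, hAsymm]
    · intro x
      have h1 := hK.dotProduct_mulVec_nonneg x
      have h2 : (0:ℝ) ≤ σ2 * (star x ⬝ᵥ x) :=
        mul_nonneg hσ (dotProduct_star_self_nonneg x)
      have h3 : star x ⬝ᵥ ((KXX + σ2 • 1) *ᵥ x)
          = star x ⬝ᵥ (KXX *ᵥ x) + σ2 * (star x ⬝ᵥ x) := by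
        simp [Matrix.add_mulVec, dotProduct_add, Matrix.smul_mulVec,
          Matrix.one_mulVec, dotProduct_smul, smul_eq_mul]
      rw [h3]
      exact add_nonneg h1 h2
  have := hApsd.mul_mul_conjTranspose_same U
  rwa [conjTranspose_eq_transpose_of_trivial] at this
end

section
/- (Proposition 2, noiseless case.) Suppose σ² = 0, the (n+m)×(n+m) block matrices Θ = [[Θ_XX, Θ_XX'],[Θ_X'X, Θ_X'X']] and K = [[K_XX, K_XX'],[K_X'X, K_X'X']] are both positive semidefinite, Θ − K is positive semidefinite, and Θ_XX and K_XX are invertible. Then Σ_NTKGP − Σ_DE and Σ_DE − Σ_NNGP are both positive semidefinite, where Σ_DE denotes Σ_RP evaluated at σ² = 0. -/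
open Matrix

lemma quadform_psd {α γ : Type*} [Fintype α] [Fintype γ] [DecidableEq γ]
    {A : Matrix α α ℝ} (hA : A.PosSemidef) (C : Matrix α γ ℝ) :
    (Cᵀ * A * C).PosSemidef := by
  have h : Cᴴ = Cᵀ := by ext i j; simp [conjTranspose_apply]
  simpa [h] using hA.conjTranspose_mul_mul_same C

set_option maxHeartbeats 1000000 in
/-- Proposition 2, noiseless case `σ² = 0`. If the block matrices
`Θ` and `K` are positive semidefinite, `Θ − K` is positive semidefinite, and `Θ_XX`, `K_XX`
are invertible, then `Σ_NTKGP − Σ_DE` and `Σ_DE − Σ_NNGP` are positive semidefinite, where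
`Σ_DE` is `Σ_RP` at `σ² = 0`. -/
theorem stmt1 (n m : ℕ) (hn : 0 < n) (hm : 0 < m)
    (ΘXX KXX : Matrix (Fin n) (Fin n) ℝ) (hΘsymm : ΘXX.IsSymm) (hKsymm : KXX.IsSymm)
    (ΘXX' KXX' : Matrix (Fin n) (Fin m) ℝ)
    (ΘX'X' KX'X' : Matrix (Fin m) (Fin m) ℝ)
    (hΘ : (Matrix.fromBlocks ΘXX ΘXX' ΘXX'ᵀ ΘX'X').PosSemidef)
    (hK : (Matrix.fromBlocks KXX KXX' KXX'ᵀ KX'X').PosSemidef)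
    (hΘK : (Matrix.fromBlocks ΘXX ΘXX' ΘXX'ᵀ ΘX'X' -
      Matrix.fromBlocks KXX KXX' KXX'ᵀ KX'X').PosSemidef)
    (hΘinv : IsUnit ΘXX.det) (hKinv : IsUnit KXX.det) :
    let ΘX'X := ΘXX'ᵀ
    let KX'X := KXX'ᵀ
    let SigNNGP := KX'X' - KX'X * KXX⁻¹ * KXX'
    let SigDE := KX'X' - ΘX'X * ΘXX⁻¹ * KXX' - KX'X * ΘXX⁻¹ * ΘXX'
      + ΘX'X * ΘXX⁻¹ * KXX * ΘXX⁻¹ * ΘXX'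
    let SigNTKGP := ΘX'X' - ΘX'X * ΘXX⁻¹ * ΘXX'
    (SigNTKGP - SigDE).PosSemidef ∧ (SigDE - SigNNGP).PosSemidef := by
  intro ΘX'X KX'X SigNNGP SigDE SigNTKGP
  have hTi : ΘXX⁻¹ᵀ = ΘXX⁻¹ := by rw [transpose_nonsing_inv, hΘsymm.eq]
  have hKi : KXX⁻¹ᵀ = KXX⁻¹ := by rw [transpose_nonsing_inv, hKsymm.eq]
  have hT1 : ΘXX⁻¹ * ΘXX = 1 := nonsing_inv_mul _ hΘinv
  have hT2 : ΘXX * ΘXX⁻¹ = 1 := mul_nonsing_inv _ hΘinv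
  have hK1 : KXX⁻¹ * KXX = 1 := nonsing_inv_mul _ hKinv
  have hK2 : KXX * KXX⁻¹ = 1 := mul_nonsing_inv _ hKinv
  have hKXXpsd : KXX.PosSemidef := by
    have := hK.submatrix (Sum.inl : Fin n → Fin n ⊕ Fin m)
    convert this using 1
    ext i j
    simp
  constructor
  · have key : SigNTKGP - SigDE =
        (fromRows (-(ΘXX⁻¹ * ΘXX')) (1 : Matrix (Fin m) (Fin m) ℝ))ᵀ *
          (Matrix.fromBlocks ΘXX ΘXX' ΘXX'ᵀ ΘX'X' -
            Matrix.fromBlocks KXX KXX' KXX'ᵀ KX'X') *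
          (fromRows (-(ΘXX⁻¹ * ΘXX')) (1 : Matrix (Fin m) (Fin m) ℝ)) := by
      rw [show (Matrix.fromBlocks ΘXX ΘXX' ΘXX'ᵀ ΘX'X' -
            Matrix.fromBlocks KXX KXX' KXX'ᵀ KX'X') =
          Matrix.fromBlocks (ΘXX - KXX) (ΘXX' - KXX') (ΘXX'ᵀ - KXX'ᵀ)
            (ΘX'X' - KX'X') from by
        simp [sub_eq_add_neg, Matrix.fromBlocks_add, Matrix.fromBlocks_neg]]
      rw [transpose_fromRows, Matrix.mul_assoc, fromBlocks_mul_fromRows,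
        fromCols_mul_fromRows]
      simp only [transpose_neg, transpose_mul, hTi, transpose_one,
        Matrix.mul_sub, Matrix.sub_mul, Matrix.mul_neg, Matrix.neg_mul,
        Matrix.mul_one, Matrix.one_mul, neg_neg, neg_sub]
      simp only [SigNTKGP, SigDE, ΘX'X, KX'X, ← Matrix.mul_assoc]
      have e1 : ΘXX'ᵀ * ΘXX⁻¹ * ΘXX * ΘXX⁻¹ = ΘXX'ᵀ * ΘXX⁻¹ := by
        rw [Matrix.mul_assoc (ΘXX'ᵀ), hT1, Matrix.mul_one]
      rw [hT2, Matrix.one_mul]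
      simp only [Matrix.mul_sub, Matrix.mul_add, Matrix.sub_mul, ← Matrix.mul_assoc]
      abel
    rw [key]
    exact quadform_psd hΘK _
  · have key : SigDE - SigNNGP =
        (ΘXX⁻¹ * ΘXX' - KXX⁻¹ * KXX')ᵀ * KXX * (ΘXX⁻¹ * ΘXX' - KXX⁻¹ * KXX') := by
      simp only [transpose_sub, transpose_mul, hTi, hKi,
        Matrix.mul_sub, Matrix.sub_mul]
      simp only [SigDE, SigNNGP, ΘX'X, KX'X, ← Matrix.mul_assoc]
      have f1 : KXX'ᵀ * KXX⁻¹ * KXX = KXX'ᵀ := by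
        rw [Matrix.mul_assoc KXX'ᵀ KXX⁻¹ KXX, hK1, Matrix.mul_one]
      have f2 : ΘXX'ᵀ * ΘXX⁻¹ * KXX * KXX⁻¹ = ΘXX'ᵀ * ΘXX⁻¹ := by
        rw [Matrix.mul_assoc (ΘXX'ᵀ * ΘXX⁻¹) KXX KXX⁻¹, hK2, Matrix.mul_one]
      rw [f1, f2]
      abel
    rw [key]
    exact quadform_psd hKXXpsd _
end

section
/- (Proposition 2, noisy case.) Suppose σ² > 0, the (n+m)×(n+m) block matrices Θ = [[Θ_XX, Θ_XX'],[Θ_X'X, Θ_X'X']] and K = [[K_XX, K_XX'],[K_X'X, K_X'X']] are both positive semidefinite, and Θ − K is positive semidefinite. Then Σ_NTKGP − Σ_RP and Σ_RP − Σ_NNGP are both positive semidefinite. -/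
set_option maxHeartbeats 1000000


open Matrix

/-- Proposition 2, noisy case `σ² > 0`. If the block matrices `Θ` and `K`
are positive semidefinite and `Θ − K` is positive semidefinite, then `Σ_NTKGP − Σ_RP` and
`Σ_RP − Σ_NNGP` are positive semidefinite. -/
theorem stmt2 (n m : ℕ) (hn : 0 < n) (hm : 0 < m) (σ2 : ℝ) (hσ : 0 < σ2)
    (ΘXX KXX : Matrix (Fin n) (Fin n) ℝ) (hΘsymm : ΘXX.IsSymm) (hKsymm : KXX.IsSymm)
    (ΘXX' KXX' : Matrix (Fin n) (Fin m) ℝ)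
    (ΘX'X' KX'X' : Matrix (Fin m) (Fin m) ℝ)
    (hΘ : (Matrix.fromBlocks ΘXX ΘXX' ΘXX'ᵀ ΘX'X').PosSemidef)
    (hK : (Matrix.fromBlocks KXX KXX' KXX'ᵀ KX'X').PosSemidef)
    (hΘK : (Matrix.fromBlocks ΘXX ΘXX' ΘXX'ᵀ ΘX'X' -
      Matrix.fromBlocks KXX KXX' KXX'ᵀ KX'X').PosSemidef) :
    let ΘX'X := ΘXX'ᵀ
    let KX'X := KXX'ᵀ
    let SigNNGP := KX'X' - KX'X * (KXX + σ2 • 1)⁻¹ * KXX'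
    let SigRP := KX'X' - ΘX'X * (ΘXX + σ2 • 1)⁻¹ * KXX'
      - KX'X * (ΘXX + σ2 • 1)⁻¹ * ΘXX'
      + ΘX'X * (ΘXX + σ2 • 1)⁻¹ * (KXX + σ2 • 1) * (ΘXX + σ2 • 1)⁻¹ * ΘXX'
    let SigNTKGP := ΘX'X' - ΘX'X * (ΘXX + σ2 • 1)⁻¹ * ΘXX'
    (SigNTKGP - SigRP).PosSemidef ∧ (SigRP - SigNNGP).PosSemidef := by
  dsimp only
  set A := ΘXX + σ2 • (1 : Matrix (Fin n) (Fin n) ℝ) with hAdef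
  set B := KXX + σ2 • (1 : Matrix (Fin n) (Fin n) ℝ) with hBdef
  have hσ1 : (σ2 • (1 : Matrix (Fin n) (Fin n) ℝ)).PosDef := by
    rw [smul_one_eq_diagonal]; exact .diagonal fun _ => hσ
  have hΘXXps : ΘXX.PosSemidef := by
    have h := hΘ.submatrix Sum.inl
    have : (fromBlocks ΘXX ΘXX' ΘXX'ᵀ ΘX'X').submatrix Sum.inl Sum.inl = ΘXX := by
      ext i j; simp [submatrix_apply]
    rwa [this] at h
  have hKXXps : KXX.PosSemidef := by
    have h := hK.submatrix Sum.inl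
    have : (fromBlocks KXX KXX' KXX'ᵀ KX'X').submatrix Sum.inl Sum.inl = KXX := by
      ext i j; simp [submatrix_apply]
    rwa [this] at h
  have hApd : A.PosDef := Matrix.PosDef.posSemidef_add hΘXXps hσ1
  have hBpd : B.PosDef := Matrix.PosDef.posSemidef_add hKXXps hσ1
  have hAdet : IsUnit A.det := hApd.det_pos.ne'.isUnit
  have hBdet : IsUnit B.det := hBpd.det_pos.ne'.isUnit
  clear_value A B
  have hAT : Aᵀ = A := by
    rw [hAdef, transpose_add, hΘsymm.eq, transpose_smul, transpose_one]
  have hAiT : A⁻¹ᵀ = A⁻¹ := by rw [transpose_nonsing_inv, hAT]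
  have hBT : Bᵀ = B := by
    rw [hBdef, transpose_add, hKsymm.eq, transpose_smul, transpose_one]
  have hBiT : B⁻¹ᵀ = B⁻¹ := by rw [transpose_nonsing_inv, hBT]
  constructor
  · -- SigNTKGP - SigRP
    set P : Matrix (Fin n ⊕ Fin m) (Fin n ⊕ Fin m) ℝ :=
      fromBlocks 0 (-(A⁻¹ * ΘXX')) 0 1 with hPdef
    have hconj := (hΘK.conjTranspose_mul_mul_same P).submatrix Sum.inr
    have hPH : Pᴴ = fromBlocks 0 0 (-(ΘXX'ᵀ * A⁻¹)) 1 := by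
      rw [hPdef, conjTranspose_eq_transpose_of_trivial, fromBlocks_transpose]
      congr 1 <;> simp [transpose_mul, hAiT]
    have hDiff : fromBlocks ΘXX ΘXX' ΘXX'ᵀ ΘX'X' - fromBlocks KXX KXX' KXX'ᵀ KX'X' =
        fromBlocks (A - B) (ΘXX' - KXX') (ΘXX'ᵀ - KXX'ᵀ) (ΘX'X' - KX'X') := by
      have hAB : A - B = ΘXX - KXX := by rw [hAdef, hBdef]; abel
      rw [hAB]
      ext i j
      rcases i with i | i <;> rcases j with j | j <;> rfl
    rw [hPH, hDiff, hPdef, fromBlocks_multiply, fromBlocks_multiply] at hconj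
    have hsub : ∀ (W : Matrix (Fin n) (Fin n) ℝ) (X : Matrix (Fin n) (Fin m) ℝ)
        (Y : Matrix (Fin m) (Fin n) ℝ) (Z : Matrix (Fin m) (Fin m) ℝ),
        (fromBlocks W X Y Z).submatrix Sum.inr Sum.inr = Z := by
      intro W X Y Z; ext i j; simp [submatrix_apply]
    rw [hsub] at hconj
    simp only [Matrix.neg_mul, Matrix.mul_neg, Matrix.one_mul, Matrix.mul_one,
      Matrix.zero_mul, Matrix.mul_zero, add_zero, zero_add, Matrix.sub_mul, Matrix.mul_sub,
      Matrix.add_mul, Matrix.mul_add, neg_sub, neg_neg, neg_add, sub_eq_add_neg,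
      ← Matrix.mul_assoc] at hconj
    rw [Matrix.nonsing_inv_mul_cancel_right _ _ hAdet] at hconj
    convert hconj using 1
    abel
  · -- SigRP - SigNNGP
    set M : Matrix (Fin n) (Fin m) ℝ := A⁻¹ * ΘXX' - B⁻¹ * KXX' with hMdef
    have hconj := hBpd.posSemidef.conjTranspose_mul_mul_same M
    have hMH : Mᴴ = ΘXX'ᵀ * A⁻¹ - KXX'ᵀ * B⁻¹ := by
      rw [conjTranspose_eq_transpose_of_trivial, hMdef, transpose_sub, transpose_mul,
        transpose_mul, hAiT, hBiT]
    have key : Mᴴ * B * M =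
        (KX'X' - ΘXX'ᵀ * A⁻¹ * KXX' - KXX'ᵀ * A⁻¹ * ΘXX'
          + ΘXX'ᵀ * A⁻¹ * B * A⁻¹ * ΘXX') -
        (KX'X' - KXX'ᵀ * B⁻¹ * KXX') := by
      rw [hMH, hMdef]
      simp only [Matrix.sub_mul, Matrix.mul_sub, ← Matrix.mul_assoc]
      rw [Matrix.mul_nonsing_inv_cancel_right _ _ hBdet,
        Matrix.nonsing_inv_mul_cancel_right _ _ hBdet]
      abel
    rw [key] at hconj
    exact hconj
end

section
/- (Consequence of Proposition 2.) Suppose σ² ≥ 0, the block matrices Θ and K are positive semidefinite, Θ − K is positive semidefinite, and Θ_XX + σ²I and K_XX + σ²I are invertible. Then Σ_NTKGP − Σ_NNGP is positive semidefinite. -/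
open Matrix

lemma aux_posDef_of_isUnit_det {k : ℕ} {A : Matrix (Fin k) (Fin k) ℝ}
    (h : A.PosSemidef) (hd : IsUnit A.det) : A.PosDef := by
  refine Matrix.PosDef.of_dotProduct_mulVec_pos h.1 fun x hx => ?_
  rcases (h.dotProduct_mulVec_nonneg x).lt_or_eq with hlt | heq
  · exact hlt
  · exfalso
    have hAx : A *ᵥ x = 0 := (h.dotProduct_mulVec_zero_iff x).mp heq.symm
    have hinj : Function.Injective A.mulVec :=
      Matrix.mulVec_injective_iff_isUnit.mpr ((Matrix.isUnit_iff_isUnit_det A).mpr hd)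
    exact hx (hinj (by simpa using hAx))

lemma aux_smul_one_psd {k : ℕ} {σ2 : ℝ} (hσ : 0 ≤ σ2) :
    (σ2 • (1 : Matrix (Fin k) (Fin k) ℝ)).PosSemidef := by
  have : σ2 • (1 : Matrix (Fin k) (Fin k) ℝ) = Matrix.diagonal (fun _ => σ2) := by
    ext i j
    by_cases h : i = j <;> simp [Matrix.one_apply, h]
  rw [this]
  exact Matrix.PosSemidef.diagonal fun _ => hσ

/-- consequence of Proposition 2. If `σ² ≥ 0`, the block matrices `Θ` and
`K` are positive semidefinite, `Θ − K` is positive semidefinite, and `Θ_XX + σ²I`,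
`K_XX + σ²I` are invertible, then `Σ_NTKGP − Σ_NNGP` is positive semidefinite. -/
theorem stmt3 (n m : ℕ) (hn : 0 < n) (hm : 0 < m) (σ2 : ℝ) (hσ : 0 ≤ σ2)
    (ΘXX KXX : Matrix (Fin n) (Fin n) ℝ) (hΘsymm : ΘXX.IsSymm) (hKsymm : KXX.IsSymm)
    (ΘXX' KXX' : Matrix (Fin n) (Fin m) ℝ)
    (ΘX'X' KX'X' : Matrix (Fin m) (Fin m) ℝ)
    (hΘ : (Matrix.fromBlocks ΘXX ΘXX' ΘXX'ᵀ ΘX'X').PosSemidef)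
    (hK : (Matrix.fromBlocks KXX KXX' KXX'ᵀ KX'X').PosSemidef)
    (hΘK : (Matrix.fromBlocks ΘXX ΘXX' ΘXX'ᵀ ΘX'X' -
      Matrix.fromBlocks KXX KXX' KXX'ᵀ KX'X').PosSemidef)
    (hΘinv : IsUnit (ΘXX + σ2 • (1 : Matrix (Fin n) (Fin n) ℝ)).det)
    (hKinv : IsUnit (KXX + σ2 • (1 : Matrix (Fin n) (Fin n) ℝ)).det) :
    let ΘX'X := ΘXX'ᵀ
    let KX'X := KXX'ᵀ
    let SigNNGP := KX'X' - KX'X * (KXX + σ2 • 1)⁻¹ * KXX'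
    let SigNTKGP := ΘX'X' - ΘX'X * (ΘXX + σ2 • 1)⁻¹ * ΘXX'
    (SigNTKGP - SigNNGP).PosSemidef := by
  intro ΘX'X KX'X SigNNGP SigNTKGP
  set A := ΘXX + σ2 • (1 : Matrix (Fin n) (Fin n) ℝ) with hA
  set B := KXX + σ2 • (1 : Matrix (Fin n) (Fin n) ℝ) with hB
  -- top-left blocks are psd
  have hΘXX : ΘXX.PosSemidef := by
    have := hΘ.submatrix (Sum.inl : Fin n → Fin n ⊕ Fin m)
    exact this
  have hKXX : KXX.PosSemidef := by
    have := hK.submatrix (Sum.inl : Fin n → Fin n ⊕ Fin m)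
    exact this
  have hApsd : A.PosSemidef := hΘXX.add (aux_smul_one_psd hσ)
  have hBpsd : B.PosSemidef := hKXX.add (aux_smul_one_psd hσ)
  have hApd : A.PosDef := aux_posDef_of_isUnit_det hApsd hΘinv
  have hBpd : B.PosDef := aux_posDef_of_isUnit_det hBpsd hKinv
  haveI : Invertible A := A.invertibleOfIsUnitDet hΘinv
  haveI : Invertible B := B.invertibleOfIsUnitDet hKinv
  -- rewrite the goal as a Schur complement
  have hgoal : SigNTKGP - SigNNGP
      = (ΘX'X' - SigNNGP) - ΘXX'ᴴ * A⁻¹ * ΘXX' := by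
    simp only [SigNTKGP, ΘX'X, conjTranspose_eq_transpose_of_trivial]
    abel
  rw [hgoal]
  rw [← Matrix.PosDef.fromBlocks₁₁ ΘXX' (ΘX'X' - SigNNGP) hApd]
  -- the big block matrix decomposes as a sum of two psd matrices
  have hdecomp : Matrix.fromBlocks A ΘXX' ΘXX'ᴴ (ΘX'X' - SigNNGP)
      = Matrix.fromBlocks B KXX' KXX'ᴴ (KX'X' - SigNNGP)
        + (Matrix.fromBlocks ΘXX ΘXX' ΘXX'ᵀ ΘX'X' -
           Matrix.fromBlocks KXX KXX' KXX'ᵀ KX'X') := by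
    ext i j
    rcases i with i | i <;> rcases j with j | j <;>
      simp [Matrix.fromBlocks, hA, hB, conjTranspose_eq_transpose_of_trivial] <;> ring
  rw [hdecomp]
  refine Matrix.PosSemidef.add ?_ hΘK
  rw [Matrix.PosDef.fromBlocks₁₁ KXX' (KX'X' - SigNNGP) hBpd]
  have : (KX'X' - SigNNGP) - KXX'ᴴ * B⁻¹ * KXX' = 0 := by
    simp only [SigNNGP, KX'X, conjTranspose_eq_transpose_of_trivial]
    abel
  rw [this]
  exact Matrix.PosSemidef.zero
end

section
/- (Identity (27) in the proof of Proposition 2.) Suppose σ² ≥ 0, Θ_XX + σ²I is invertible, and the (n+m)×(n+m) block matrix Δ := Θ − K (with blocks Δ_XX = Θ_XX − K_XX, Δ_XX' = Θ_XX' − K_XX', Δ_X'X = Δ_XX'ᵀ, Δ_X'X' = Θ_X'X' − K_X'X') is positive semidefinite. Let G be an n×n matrix satisfying Δ_XX G Δ_XX = Δ_XX (a generalised inverse of Δ_XX). Define U₁ = Δ_X'X' − Δ_X'X G Δ_XX' and U₂ = Θ_X'X(Θ_XX + σ²I)⁻¹ − Δ_X'X G. Then Σ_NTKGP − Σ_RP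 = U₁ + U₂ Δ_XX U₂ᵀ. -/
open Matrix

lemma aux_key {n m : ℕ} (D : Matrix (Fin n) (Fin n) ℝ) (B : Matrix (Fin n) (Fin m) ℝ)
    (E : Matrix (Fin m) (Fin m) ℝ) (hΔ : (Matrix.fromBlocks D B Bᵀ E).PosSemidef)
    (G : Matrix (Fin n) (Fin n) ℝ) (hG : D * G * D = D) : D * Gᵀ * B = B := by
  obtain ⟨L, hL⟩ : ∃ L : Matrix (Fin n ⊕ Fin m) (Fin n ⊕ Fin m) ℝ,
      Matrix.fromBlocks D B Bᵀ E = Lᴴ * L := by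
    open scoped MatrixOrder Matrix.Norms.L2Operator in
    exact CStarAlgebra.nonneg_iff_eq_star_mul_self.mp hΔ.nonneg
  set P := L.submatrix id Sum.inl with hP
  set Q := L.submatrix id Sum.inr with hQ
  have hD : D = Pᴴ * P := by
    ext i j
    have := Matrix.ext_iff.2 hL (Sum.inl i) (Sum.inl j)
    simpa [Matrix.mul_apply, Matrix.conjTranspose_apply, hP] using this
  have hB : B = Pᴴ * Q := by
    ext i j
    have := Matrix.ext_iff.2 hL (Sum.inl i) (Sum.inr j)
    simpa [Matrix.mul_apply, Matrix.conjTranspose_apply, hP, hQ] using this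
  have h1 : P * (G * (Pᴴ * P) - 1) = 0 := by
    rw [← Matrix.conjTranspose_mul_self_mul_eq_zero P]
    rw [Matrix.mul_sub, Matrix.mul_one, sub_eq_zero]
    rw [hD] at hG
    rw [← Matrix.mul_assoc]
    exact hG
  have h2 : P * G * Pᴴ * P = P := by
    have := h1
    rw [Matrix.mul_sub, Matrix.mul_one, sub_eq_zero] at this
    rw [Matrix.mul_assoc, Matrix.mul_assoc]
    exact this
  have h3 : Pᴴ * P * Gᴴ * Pᴴ = Pᴴ := by
    have := congrArg Matrix.conjTranspose h2
    simpa [Matrix.conjTranspose_mul, Matrix.mul_assoc] using this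
  have hGH : Gᴴ = Gᵀ := by ext i j; simp [Matrix.conjTranspose_apply]
  rw [hD, hB, ← hGH, Matrix.mul_assoc, ← Matrix.mul_assoc (Pᴴ * P), ← Matrix.mul_assoc, h3]

/-- identity (27) in the proof of Proposition 2. With `Δ = Θ − K`
positive semidefinite (as a block matrix), `G` a generalised inverse of `Δ_XX`,
`U₁ = Δ_X'X' − Δ_X'X G Δ_XX'` and `U₂ = Θ_X'X (Θ_XX + σ²I)⁻¹ − Δ_X'X G`, we have
`Σ_NTKGP − Σ_RP = U₁ + U₂ Δ_XX U₂ᵀ`. -/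
theorem stmt4 (n m : ℕ) (hn : 0 < n) (hm : 0 < m) (σ2 : ℝ) (hσ : 0 ≤ σ2)
    (ΘXX KXX : Matrix (Fin n) (Fin n) ℝ) (hΘsymm : ΘXX.IsSymm) (hKsymm : KXX.IsSymm)
    (ΘXX' KXX' : Matrix (Fin n) (Fin m) ℝ)
    (ΘX'X' KX'X' : Matrix (Fin m) (Fin m) ℝ)
    (hΘinv : IsUnit (ΘXX + σ2 • (1 : Matrix (Fin n) (Fin n) ℝ)).det)
    (hΔ : (Matrix.fromBlocks (ΘXX - KXX) (ΘXX' - KXX') (ΘXX' - KXX')ᵀ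
      (ΘX'X' - KX'X')).PosSemidef)
    (G : Matrix (Fin n) (Fin n) ℝ)
    (hG : (ΘXX - KXX) * G * (ΘXX - KXX) = ΘXX - KXX) :
    let ΘX'X := ΘXX'ᵀ
    let KX'X := KXX'ᵀ
    let ΔXX := ΘXX - KXX
    let ΔXX' := ΘXX' - KXX'
    let ΔX'X := (ΘXX' - KXX')ᵀ
    let ΔX'X' := ΘX'X' - KX'X'
    let SigRP := KX'X' - ΘX'X * (ΘXX + σ2 • 1)⁻¹ * KXX'
      - KX'X * (ΘXX + σ2 • 1)⁻¹ * ΘXX'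
      + ΘX'X * (ΘXX + σ2 • 1)⁻¹ * (KXX + σ2 • 1) * (ΘXX + σ2 • 1)⁻¹ * ΘXX'
    let SigNTKGP := ΘX'X' - ΘX'X * (ΘXX + σ2 • 1)⁻¹ * ΘXX'
    let U1 := ΔX'X' - ΔX'X * G * ΔXX'
    let U2 := ΘX'X * (ΘXX + σ2 • 1)⁻¹ - ΔX'X * G
    SigNTKGP - SigRP = U1 + U2 * ΔXX * U2ᵀ := by
  set X : Matrix (Fin n) (Fin n) ℝ := ΘXX + σ2 • 1 with hX
  set A : Matrix (Fin n) (Fin n) ℝ := X⁻¹ with hA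
  set D : Matrix (Fin n) (Fin n) ℝ := ΘXX - KXX with hD
  set B : Matrix (Fin n) (Fin m) ℝ := ΘXX' - KXX' with hB
  set E : Matrix (Fin m) (Fin m) ℝ := ΘX'X' - KX'X' with hE
  -- basic facts
  have hXT : Xᵀ = X := by
    rw [hX, Matrix.transpose_add, hΘsymm.eq]
    congr 1
    simp [Matrix.transpose_smul]
  have hAT : Aᵀ = A := by rw [hA, Matrix.transpose_nonsing_inv, hXT]
  have hDT : Dᵀ = D := by rw [hD, Matrix.transpose_sub, hΘsymm.eq, hKsymm.eq]
  have hAX : A * X = 1 := Matrix.nonsing_inv_mul X hΘinv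
  have key1 : D * Gᵀ * B = B := aux_key D B E hΔ G hG
  -- right-associated versions for simp
  have key1' : ∀ {p : ℕ} (M : Matrix (Fin m) (Fin p) ℝ), D * (Gᵀ * (B * M)) = B * M := by
    intro p M
    rw [← Matrix.mul_assoc, ← Matrix.mul_assoc, key1]
  have key1'' : D * (Gᵀ * B) = B := by rw [← Matrix.mul_assoc]; exact key1
  have key2' : ∀ {p : ℕ} (M : Matrix (Fin n) (Fin p) ℝ), Bᵀ * (G * (D * M)) = Bᵀ * M := by
    intro p M
    have key2 : Bᵀ * G * D = Bᵀ := by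
      have := congrArg Matrix.transpose key1
      simpa [Matrix.transpose_mul, hDT, Matrix.mul_assoc] using this
    rw [← Matrix.mul_assoc, ← Matrix.mul_assoc, key2]
  have hAX' : ∀ {p : ℕ} (M : Matrix (Fin n) (Fin p) ℝ), A * (X * M) = M := by
    intro p M
    rw [← Matrix.mul_assoc, hAX, Matrix.one_mul]
  -- rewrite the K's in terms of Θ's and Δ's
  have hK1 : KXX' = ΘXX' - B := by rw [hB]; abel
  have hK2 : KX'X' = ΘX'X' - E := by rw [hE]; abel
  have hK3 : KXX + σ2 • (1 : Matrix (Fin n) (Fin n) ℝ) = X - D := by rw [hX, hD]; abel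
  show ΘX'X' - ΘXX'ᵀ * A * ΘXX'
      - (KX'X' - ΘXX'ᵀ * A * KXX' - KXX'ᵀ * A * ΘXX'
        + ΘXX'ᵀ * A * (KXX + σ2 • 1) * A * ΘXX')
    = (E - Bᵀ * G * B) + (ΘXX'ᵀ * A - Bᵀ * G) * D * (ΘXX'ᵀ * A - Bᵀ * G)ᵀ
  rw [hK1, hK2, hK3]
  simp only [Matrix.transpose_sub, Matrix.transpose_mul, Matrix.transpose_transpose, hAT]
  simp only [Matrix.mul_sub, Matrix.sub_mul, Matrix.mul_assoc, key1', key1'', key2', hAX']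
  abel
end

section
/- (Generalised Schur complement positivity, used in the proof of Proposition 2.) Let A be a symmetric n×n real matrix, B an n×m real matrix, and D a symmetric m×m real matrix such that the (n+m)×(n+m) block matrix [[A, B],[Bᵀ, D]] is positive semidefinite. If G is any n×n matrix with A G A = A (a generalised inverse of A), then the generalised Schur complement D − Bᵀ G B is positive semidefinite. -/
open Matrix

/-- generalised Schur complement positivity. If the block matrix
`[[A, B],[Bᵀ, D]]` is positive semidefinite and `G` is a generalised inverse of `A`
(`A G A = A`), then the generalised Schur complement `D − Bᵀ G B` is positive
semidefinite. -/
theorem stmt6 (n m : ℕ) (A : Matrix (Fin n) (Fin n) ℝ) (hA : A.IsSymm)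
    (B : Matrix (Fin n) (Fin m) ℝ) (D : Matrix (Fin m) (Fin m) ℝ) (hD : D.IsSymm)
    (hpsd : (Matrix.fromBlocks A B Bᵀ D).PosSemidef)
    (G : Matrix (Fin n) (Fin n) ℝ) (hG : A * G * A = A) :
    (D - Bᵀ * G * B).PosSemidef := by
  -- Gᵀ is also a generalised inverse of A
  have hG' : A * Gᵀ * A = A := by
    calc A * Gᵀ * A = (A * G * A)ᵀ := by rw [transpose_mul, transpose_mul, hA.eq, mul_assoc]
    _ = A := by rw [hG, hA.eq]
  -- the quadratic form of the block matrix
  have hq : ∀ (u : Fin n → ℝ) (y : Fin m → ℝ),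
      0 ≤ u ⬝ᵥ (A *ᵥ u) + u ⬝ᵥ (B *ᵥ y) + (y ⬝ᵥ (Bᵀ *ᵥ u) + y ⬝ᵥ (D *ᵥ y)) := by
    intro u y
    have h := hpsd.dotProduct_mulVec_nonneg (Sum.elim u y)
    simpa [fromBlocks_mulVec, Sum.elim_comp_inl, Sum.elim_comp_inr,
      sumElim_dotProduct_sumElim, dotProduct_add] using h
  -- kernel of A is contained in kernel of Bᵀ
  have hker : ∀ x : Fin n → ℝ, A *ᵥ x = 0 → Bᵀ *ᵥ x = 0 := by
    intro x hx
    set c : Fin m → ℝ := Bᵀ *ᵥ x with hc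
    have key : ∀ t : ℝ, 0 ≤ (c ⬝ᵥ (D *ᵥ c)) * (t * t) + (2 * (c ⬝ᵥ c)) * t + 0 := by
      intro t
      have h := hq x (t • c)
      have h1 : x ⬝ᵥ (B *ᵥ (t • c)) = t * (c ⬝ᵥ c) := by
        rw [dotProduct_mulVec, ← mulVec_transpose, ← hc, dotProduct_smul, smul_eq_mul]
      have h2 : (t • c) ⬝ᵥ (Bᵀ *ᵥ x) = t * (c ⬝ᵥ c) := by
        rw [← hc, smul_dotProduct, smul_eq_mul]
      have h3 : (t • c) ⬝ᵥ (D *ᵥ (t • c)) = (c ⬝ᵥ (D *ᵥ c)) * (t * t) := by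
        rw [mulVec_smul, smul_dotProduct, dotProduct_smul]
        simp [smul_eq_mul]; ring
      rw [hx, dotProduct_zero, h1, h2, h3] at h
      linarith
    have hdisc := discrim_le_zero key
    rw [discrim] at hdisc
    have hs : c ⬝ᵥ c = 0 := by nlinarith [hdisc]
    rwa [dotProduct_self_eq_zero] at hs
  -- hence A * (G * B) = B
  set X : Matrix (Fin n) (Fin m) ℝ := G * B with hXdef
  have hAX : A * X = B := by
    have hvec : ∀ x : Fin n → ℝ, Bᵀ *ᵥ (Gᵀ *ᵥ (A *ᵥ x)) = Bᵀ *ᵥ x := by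
      intro x
      have hker' : A *ᵥ (Gᵀ *ᵥ (A *ᵥ x) - x) = 0 := by
        rw [mulVec_sub, mulVec_mulVec, mulVec_mulVec, hG', sub_self]
      have := hker _ hker'
      rw [mulVec_sub, sub_eq_zero] at this
      exact this
    have hmat : Bᵀ * Gᵀ * A = Bᵀ := by
      ext i j
      have := congrFun (hvec (Pi.single j 1)) i
      rw [mulVec_mulVec, mulVec_mulVec, mulVec_single_one, mulVec_single_one] at this
      simpa using this
    have h2 := congrArg Matrix.transpose hmat
    rw [transpose_mul, transpose_mul, transpose_transpose, transpose_transpose, hA.eq] at h2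
    rw [hXdef]
    exact h2
  -- rewrite the Schur complement
  have hrw : Bᵀ * G * B = Xᵀ * A * X := by
    calc Bᵀ * G * B = Bᵀ * X := by rw [hXdef, ← Matrix.mul_assoc]
    _ = (A * X)ᵀ * X := by rw [hAX]
    _ = Xᵀ * A * X := by rw [transpose_mul, hA.eq]
  rw [hrw]
  clear hXdef
  clear_value X
  refine Matrix.PosSemidef.of_dotProduct_mulVec_nonneg ?_ ?_
  · -- Hermitian
    have hsymm : (D - Xᵀ * A * X)ᵀ = D - Xᵀ * A * X := by
      rw [transpose_sub, hD.eq, transpose_mul, transpose_mul, transpose_transpose, hA.eq,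
        Matrix.mul_assoc]
    simpa [Matrix.IsHermitian, conjTranspose_eq_transpose_of_trivial] using hsymm
  · intro y
    set w : Fin n → ℝ := X *ᵥ y with hw
    have h := hq (-w) y
    have eB : B *ᵥ y = A *ᵥ w := by rw [hw, mulVec_mulVec, hAX]
    have h1 : (-w) ⬝ᵥ (A *ᵥ (-w)) = w ⬝ᵥ (A *ᵥ w) := by
      rw [mulVec_neg, neg_dotProduct, dotProduct_neg, neg_neg]
    have h2 : (-w) ⬝ᵥ (B *ᵥ y) = -(w ⬝ᵥ (A *ᵥ w)) := by
      rw [eB, neg_dotProduct]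
    have h3 : y ⬝ᵥ (Bᵀ *ᵥ (-w)) = -(w ⬝ᵥ (A *ᵥ w)) := by
      rw [mulVec_neg, dotProduct_neg, dotProduct_mulVec, vecMul_transpose, eB,
        dotProduct_comm]
    have egoal : star y ⬝ᵥ ((D - Xᵀ * A * X) *ᵥ y)
        = y ⬝ᵥ (D *ᵥ y) - w ⬝ᵥ (A *ᵥ w) := by
      rw [star_trivial, sub_mulVec, dotProduct_sub]
      congr 1
      rw [← mulVec_mulVec, ← mulVec_mulVec, dotProduct_mulVec, vecMul_transpose, hw]
    rw [h1, h2, h3] at h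
    rw [egoal]
    linarith
end

section
/- (Posterior covariance identity underlying Lemma 3 of Osband et al.) Let Z be an n×p real matrix and σ², λ > 0. Set M = ZᵀZ + (σ²/λ)I_p (which is invertible) and A = M⁻¹Zᵀ. Then λ(I − AZ)(I − AZ)ᵀ + σ² A Aᵀ = σ² M⁻¹. -/
open Matrix

/-- posterior covariance identity underlying Lemma 3 of Osband et al..
With `M = ZᵀZ + (σ²/λ)I` (which is invertible) and `A = M⁻¹Zᵀ`, we have
`λ(I − AZ)(I − AZ)ᵀ + σ² A Aᵀ = σ² M⁻¹`. -/
theorem stmt13 (n p : ℕ) (Z : Matrix (Fin n) (Fin p) ℝ)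
    (σ2 lam : ℝ) (hσ : 0 < σ2) (hlam : 0 < lam) :
    let M : Matrix (Fin p) (Fin p) ℝ := Zᵀ * Z + (σ2 / lam) • 1
    let A := M⁻¹ * Zᵀ
    IsUnit M.det ∧
      lam • ((1 - A * Z) * (1 - A * Z)ᵀ) + σ2 • (A * Aᵀ) = σ2 • M⁻¹ := by
  intro M A
  have hc : 0 < σ2 / lam := div_pos hσ hlam
  have hZ : (Zᵀ * Z).PosSemidef := by
    simpa [conjTranspose_eq_transpose_of_trivial] using posSemidef_conjTranspose_mul_self Z
  have hI : ((σ2 / lam) • (1 : Matrix (Fin p) (Fin p) ℝ)).PosDef := by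
    rw [smul_one_eq_diagonal]
    exact Matrix.PosDef.diagonal (fun _ => hc)
  have hM : M.PosDef := Matrix.PosDef.posSemidef_add hZ hI
  have hdet : IsUnit M.det := hM.det_pos.ne'.isUnit
  have hinv : M⁻¹ * M = 1 := nonsing_inv_mul M hdet
  have hsym : Mᵀ = M := by
    show (Zᵀ * Z + (σ2 / lam) • 1)ᵀ = _
    rw [transpose_add, transpose_smul, transpose_one, transpose_mul, transpose_transpose]
  have hiT : M⁻¹ᵀ = M⁻¹ := by rw [transpose_nonsing_inv, hsym]
  have h1 : 1 - A * Z = (σ2 / lam) • M⁻¹ := by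
    have : A * Z = M⁻¹ * (Zᵀ * Z) := Matrix.mul_assoc _ _ _
    rw [this, ← hinv, ← Matrix.mul_sub]
    show M⁻¹ * (Zᵀ * Z + (σ2 / lam) • 1 - Zᵀ * Z) = _
    rw [add_sub_cancel_left, Matrix.mul_smul, Matrix.mul_one]
  refine ⟨hdet, ?_⟩
  have hAA : A * Aᵀ = M⁻¹ * (Zᵀ * Z) * M⁻¹ := by
    show (M⁻¹ * Zᵀ) * (M⁻¹ * Zᵀ)ᵀ = _
    rw [transpose_mul, transpose_transpose, hiT]
    simp only [Matrix.mul_assoc]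
  rw [h1, hAA, transpose_smul, hiT, smul_mul_smul_comm, smul_smul]
  have hkey : lam * (σ2 / lam * (σ2 / lam)) = σ2 * (σ2 / lam) := by
    field_simp
  rw [hkey, mul_smul, ← smul_add]
  congr 1
  have : (σ2 / lam) • (M⁻¹ * M⁻¹) = M⁻¹ * ((σ2 / lam) • 1) * M⁻¹ := by
    rw [Matrix.mul_smul, Matrix.mul_one, Matrix.smul_mul]
  rw [this, ← Matrix.add_mul, ← Matrix.mul_add]
  show M⁻¹ * ((σ2 / lam) • 1 + Zᵀ * Z) * M⁻¹ = M⁻¹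
  rw [add_comm]
  rw [show Zᵀ * Z + (σ2 / lam) • 1 = M from rfl, hinv, Matrix.one_mul]
end
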